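/- For a prime power q and natural numbers m, n, r with r ≤ min(m, n), the number of m×n matrices over 𝔽_q whose rank equals r is ∏_{j=0}^{r-1} (q^m − q^j)(q^n − q^j)/(q^r − q^j); equivalently, the cardinality of {A : Matrix (Fin m) (Fin n) 𝔽_q | rank A = r} times ∏_{j=0}^{r-1} (q^r − q^j) equals ∏_{j=0}^{r-1} (q^m − q^j)(q^n − q^j). -/

import Mathlib

open Matrix Module LinearMap

variable {F : Type} [Field F] [Fintype F]

/-- rank = r iff columns linearly independent (for an m × r matrix). -/
lemma aux_rank_iff_li {m r : ℕ} (B : Matrix (Fin m) (Fin r) F) :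
    B.rank = r ↔ LinearIndependent F Bᵀ := by
  rw [show LinearIndependent F Bᵀ ↔ _ from linearIndependent_iff_card_eq_finrank_span,
    Matrix.rank_eq_finrank_span_cols, Fintype.card_fin, Set.finrank, eq_comm]
  rfl

lemma aux_card_full {m r : ℕ} (hrm : r ≤ m) :
    Nat.card {B : Matrix (Fin m) (Fin r) F // B.rank = r} =
      ∏ j ∈ Finset.range r, (Fintype.card F ^ m - Fintype.card F ^ j) := by
  have e : {B : Matrix (Fin m) (Fin r) F // B.rank = r} ≃
      { s : Fin r → (Fin m → F) // LinearIndependent F s } :=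
    { toFun := fun B => ⟨B.1ᵀ, (aux_rank_iff_li B.1).1 B.2⟩
      invFun := fun s => ⟨(Matrix.of s.1)ᵀ, (aux_rank_iff_li _).2 s.2⟩
      left_inv := fun B => by ext i j; rfl
      right_inv := fun s => by ext i j; rfl }
  rw [Nat.card_congr e,
    card_linearIndependent (K := F) (V := Fin m → F)
      (by simpa [Module.finrank_fintype_fun_eq_card] using hrm)]
  simp only [Module.finrank_fintype_fun_eq_card, Fintype.card_fin]
  exact Fin.prod_univ_eq_prod_range (fun j => Fintype.card F ^ m - Fintype.card F ^ j) r

set_option linter.unusedSectionVars false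

/-- A full-column-rank matrix has a left inverse. -/
lemma aux_left_inv {m r : ℕ} (B : Matrix (Fin m) (Fin r) F) (hB : B.rank = r) :
    ∃ L : Matrix (Fin r) (Fin m) F, L * B = 1 := by
  have hinj : Function.Injective B.mulVecLin := by
    rw [← LinearMap.ker_eq_bot]
    have h1 := B.mulVecLin.finrank_range_add_finrank_ker
    rw [Module.finrank_fintype_fun_eq_card, Fintype.card_fin] at h1
    have hk : Module.finrank F (LinearMap.ker B.mulVecLin) = 0 := by
      have : Matrix.rank B = Module.finrank F (LinearMap.range B.mulVecLin) := rfl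
      omega
    exact Submodule.finrank_eq_zero.mp hk
  obtain ⟨g, hg⟩ := B.mulVecLin.exists_leftInverse_of_injective (LinearMap.ker_eq_bot.mpr hinj)
  refine ⟨LinearMap.toMatrix' g, ?_⟩
  have : B = LinearMap.toMatrix' B.mulVecLin := (LinearMap.toMatrix'_toLin' B).symm
  rw [this, ← LinearMap.toMatrix'_comp, hg, LinearMap.toMatrix'_id]

/-- A full-row-rank matrix has a right inverse. -/
lemma aux_right_inv {n r : ℕ} (C : Matrix (Fin r) (Fin n) F) (hC : C.rank = r) :
    ∃ R : Matrix (Fin n) (Fin r) F, C * R = 1 := by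
  have hsurj : Function.Surjective C.mulVecLin := by
    rw [← LinearMap.range_eq_top]
    apply Submodule.eq_top_of_finrank_eq
    have : Matrix.rank C = Module.finrank F (LinearMap.range C.mulVecLin) := rfl
    rw [← this, hC, Module.finrank_fintype_fun_eq_card, Fintype.card_fin]
  obtain ⟨g, hg⟩ := C.mulVecLin.exists_rightInverse_of_surjective (LinearMap.range_eq_top.mpr hsurj)
  refine ⟨LinearMap.toMatrix' g, ?_⟩
  have : C = LinearMap.toMatrix' C.mulVecLin := (LinearMap.toMatrix'_toLin' C).symm
  rw [this, ← LinearMap.toMatrix'_comp, hg, LinearMap.toMatrix'_id]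

/-- rank of product of two full rank matrices. -/
lemma aux_rank_mul {m n r : ℕ} (B : Matrix (Fin m) (Fin r) F) (C : Matrix (Fin r) (Fin n) F)
    (hB : B.rank = r) (hC : C.rank = r) : (B * C).rank = r := by
  obtain ⟨L, hL⟩ := aux_left_inv B hB
  refine le_antisymm ((Matrix.rank_mul_le_right B C).trans_eq hC) ?_
  have : C = L * (B * C) := by rw [← Matrix.mul_assoc, hL, Matrix.one_mul]
  calc r = C.rank := hC.symm
    _ = (L * (B * C)).rank := by rw [← this]
    _ ≤ (B * C).rank := Matrix.rank_mul_le_right L (B * C)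

/-- Every rank-r matrix factors as a product of full-rank matrices. -/
lemma aux_factor {m n r : ℕ} (A : Matrix (Fin m) (Fin n) F) (hA : A.rank = r) :
    ∃ (B : Matrix (Fin m) (Fin r) F) (C : Matrix (Fin r) (Fin n) F),
      B.rank = r ∧ C.rank = r ∧ B * C = A := by
  have hW : Module.finrank F (LinearMap.range A.mulVecLin) = r := hA
  obtain ⟨e⟩ : Nonempty (LinearMap.range A.mulVecLin ≃ₗ[F] (Fin r → F)) :=
    FiniteDimensional.nonempty_linearEquiv_of_finrank_eq
      (by rw [hW, Module.finrank_fintype_fun_eq_card, Fintype.card_fin])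
  set h : (Fin r → F) →ₗ[F] (Fin m → F) :=
    (LinearMap.range A.mulVecLin).subtype ∘ₗ e.symm.toLinearMap with hh
  set g : (Fin n → F) →ₗ[F] (Fin r → F) := e.toLinearMap ∘ₗ A.mulVecLin.rangeRestrict with hgdef
  refine ⟨LinearMap.toMatrix' h, LinearMap.toMatrix' g, ?_, ?_, ?_⟩
  · have hmv : (LinearMap.toMatrix' h).mulVecLin = h := Matrix.toLin'_toMatrix' h
    have : (LinearMap.toMatrix' h).rank
        = Module.finrank F (LinearMap.range (LinearMap.toMatrix' h).mulVecLin) := rfl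
    rw [this, hmv, LinearMap.finrank_range_of_inj, Module.finrank_fintype_fun_eq_card,
      Fintype.card_fin]
    exact (LinearMap.range A.mulVecLin).injective_subtype.comp e.symm.injective
  · have hmv : (LinearMap.toMatrix' g).mulVecLin = g := Matrix.toLin'_toMatrix' g
    have : (LinearMap.toMatrix' g).rank
        = Module.finrank F (LinearMap.range (LinearMap.toMatrix' g).mulVecLin) := rfl
    rw [this, hmv, LinearMap.range_eq_top.mpr, finrank_top,
      Module.finrank_fintype_fun_eq_card, Fintype.card_fin]
    exact e.surjective.comp A.mulVecLin.surjective_rangeRestrict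
  · rw [← LinearMap.toMatrix'_comp]
    have : h ∘ₗ g = A.mulVecLin := by
      ext x; simp [hh, hgdef]
    rw [this]
    exact LinearMap.toMatrix'_toLin' A

/-- The fiber of (B, C) ↦ B * C over a rank-r matrix A is in bijection with GL(r). -/
lemma aux_fiber {m n r : ℕ} (A : Matrix (Fin m) (Fin n) F) (hA : A.rank = r) :
    Nat.card {p : {B : Matrix (Fin m) (Fin r) F // B.rank = r} ×
        {C : Matrix (Fin r) (Fin n) F // C.rank = r} // p.1.1 * p.2.1 = A} =
      Nat.card (GL (Fin r) F) := by
  obtain ⟨B₀, C₀, hB₀, hC₀, hfac⟩ := aux_factor A hA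
  obtain ⟨L, hL⟩ := aux_left_inv B₀ hB₀
  obtain ⟨R, hR⟩ := aux_right_inv C₀ hC₀
  apply Nat.card_congr
  have toFun_pf : ∀ p : {p : {B : Matrix (Fin m) (Fin r) F // B.rank = r} ×
      {C : Matrix (Fin r) (Fin n) F // C.rank = r} // p.1.1 * p.2.1 = A},
      (L * p.1.1.1) * (p.1.2.1 * R) = 1 := by
    intro ⟨⟨⟨B, hB⟩, ⟨C, hC⟩⟩, hp⟩
    have hBC : B * C = B₀ * C₀ := hp.trans hfac.symm
    calc L * B * (C * R) = L * (B * C) * R := by simp only [Matrix.mul_assoc]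
      _ = L * B₀ * (C₀ * R) := by rw [hBC]; simp only [Matrix.mul_assoc]
      _ = 1 := by rw [hL, hR, Matrix.one_mul]
  refine
    { toFun := fun p => ⟨L * p.1.1.1, p.1.2.1 * R, toFun_pf p,
        mul_eq_one_comm.mp (toFun_pf p)⟩
      invFun := fun u => ⟨(⟨B₀ * u.val, ?_⟩, ⟨u.inv * C₀, ?_⟩), ?_⟩
      left_inv := ?_
      right_inv := ?_ }
  · -- rank (B₀ * u.val) = r
    refine le_antisymm ((Matrix.rank_mul_le_left _ _).trans_eq hB₀) ?_
    have h1 : B₀ * u.val * u.inv = B₀ := by rw [Matrix.mul_assoc, u.val_inv, Matrix.mul_one]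
    calc r = B₀.rank := hB₀.symm
      _ = (B₀ * u.val * u.inv).rank := by rw [h1]
      _ ≤ (B₀ * u.val).rank := Matrix.rank_mul_le_left _ _
  · -- rank (u.inv * C₀) = r
    refine le_antisymm ((Matrix.rank_mul_le_right _ _).trans_eq hC₀) ?_
    have h1 : u.val * (u.inv * C₀) = C₀ := by rw [← Matrix.mul_assoc, u.val_inv, Matrix.one_mul]
    calc r = C₀.rank := hC₀.symm
      _ = (u.val * (u.inv * C₀)).rank := by rw [h1]
      _ ≤ (u.inv * C₀).rank := Matrix.rank_mul_le_right _ _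
  · -- B₀ * u.val * (u.inv * C₀) = A
    calc B₀ * u.val * (u.inv * C₀) = B₀ * (u.val * u.inv) * C₀ := by
          simp only [Matrix.mul_assoc]
      _ = A := by rw [u.val_inv, Matrix.mul_one, hfac]
  · -- left inverse
    rintro ⟨⟨⟨B, hB⟩, ⟨C, hC⟩⟩, hp⟩
    have hBC : B * C = B₀ * C₀ := hp.trans hfac.symm
    obtain ⟨Rc, hRc⟩ := aux_right_inv C hC
    obtain ⟨Lb, hLb⟩ := aux_left_inv B hB
    have hBX : B = B₀ * (C₀ * Rc) := by
      calc B = B * (C * Rc) := by rw [hRc, Matrix.mul_one]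
        _ = B * C * Rc := by rw [Matrix.mul_assoc]
        _ = B₀ * (C₀ * Rc) := by rw [hBC, Matrix.mul_assoc]
    have hCY : C = (Lb * B₀) * C₀ := by
      calc C = Lb * B * C := by rw [hLb, Matrix.one_mul]
        _ = Lb * (B₀ * C₀) := by rw [Matrix.mul_assoc, hBC]
        _ = (Lb * B₀) * C₀ := by rw [Matrix.mul_assoc]
    apply Subtype.ext
    refine Prod.ext (Subtype.ext ?_) (Subtype.ext ?_)
    · show B₀ * (L * B) = B
      calc B₀ * (L * B) = B₀ * (L * (B₀ * (C₀ * Rc))) := by rw [← hBX]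
        _ = B₀ * ((L * B₀) * (C₀ * Rc)) := by simp only [Matrix.mul_assoc]
        _ = B₀ * (C₀ * Rc) := by rw [hL, Matrix.one_mul]
        _ = B := hBX.symm
    · show (C * R) * C₀ = C
      calc (C * R) * C₀ = ((Lb * B₀) * C₀ * R) * C₀ := by rw [← hCY]
        _ = (Lb * B₀) * ((C₀ * R) * C₀) := by simp only [Matrix.mul_assoc]
        _ = (Lb * B₀) * C₀ := by rw [hR, Matrix.one_mul]
        _ = C := hCY.symm
  · -- right inverse
    intro u
    apply Units.ext
    show L * (B₀ * u.val) = u.val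
    rw [← Matrix.mul_assoc, hL, Matrix.one_mul]

lemma aux_key {m n r : ℕ} :
    Nat.card ({B : Matrix (Fin m) (Fin r) F // B.rank = r} ×
        {C : Matrix (Fin r) (Fin n) F // C.rank = r}) =
      Nat.card {A : Matrix (Fin m) (Fin n) F // A.rank = r} * Nat.card (GL (Fin r) F) := by
  classical
  set Φ : ({B : Matrix (Fin m) (Fin r) F // B.rank = r} ×
      {C : Matrix (Fin r) (Fin n) F // C.rank = r}) →
      {A : Matrix (Fin m) (Fin n) F // A.rank = r} :=
    fun p => ⟨p.1.1 * p.2.1, aux_rank_mul _ _ p.1.2 p.2.2⟩ with hΦ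
  haveI : Fintype {A : Matrix (Fin m) (Fin n) F // A.rank = r} := Fintype.ofFinite _
  haveI : Fintype ({B : Matrix (Fin m) (Fin r) F // B.rank = r} ×
      {C : Matrix (Fin r) (Fin n) F // C.rank = r}) := Fintype.ofFinite _
  haveI : ∀ a : {A : Matrix (Fin m) (Fin n) F // A.rank = r},
      Fintype {p // Φ p = a} := fun a => Fintype.ofFinite _
  rw [Nat.card_congr (Equiv.sigmaFiberEquiv Φ).symm, Nat.card_eq_fintype_card,
    Fintype.card_sigma]
  have hcard : ∀ a : {A : Matrix (Fin m) (Fin n) F // A.rank = r},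
      Fintype.card {p // Φ p = a} = Nat.card (GL (Fin r) F) := by
    intro a
    rw [← Nat.card_eq_fintype_card,
      Nat.card_congr (Equiv.subtypeEquivRight (q := fun p => p.1.1 * p.2.1 = a.1)
        (fun p => Subtype.ext_iff))]
    exact aux_fiber a.1 a.2
  rw [Finset.sum_congr rfl (fun a _ => hcard a), Finset.sum_const, smul_eq_mul,
    Nat.card_eq_fintype_card (α := GL (Fin r) F), Finset.card_univ, Nat.card_eq_fintype_card]

lemma aux_card_GL {r : ℕ} :
    Nat.card (GL (Fin r) F) = ∏ j ∈ Finset.range r,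
      (Fintype.card F ^ r - Fintype.card F ^ j) := by
  rw [Matrix.card_GL_field]
  exact Fin.prod_univ_eq_prod_range
    (fun j => Fintype.card F ^ r - Fintype.card F ^ j) r

/-- For a prime power `q` and naturals `m, n, r` with `r ≤ min(m, n)`, the number
of `m × n` matrices over `𝔽_q` of rank `r`, multiplied by `∏_{j=0}^{r-1} (q^r − q^j)`,
equals `∏_{j=0}^{r-1} (q^m − q^j)(q^n − q^j)`. -/
theorem num_rank_r_matrices (q m n r : ℕ) (hq : IsPrimePow q) (hr : r ≤ min m n)
    (F : Type) [Field F] [Fintype F] (hF : Fintype.card F = q) :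
    Nat.card {A : Matrix (Fin m) (Fin n) F // A.rank = r} *
        ∏ j ∈ Finset.range r, (q ^ r - q ^ j) =
      ∏ j ∈ Finset.range r, (q ^ m - q ^ j) * (q ^ n - q ^ j) := by
  subst hF
  rw [Finset.prod_mul_distrib, ← aux_card_full (F := F) (le_min_iff.mp hr).1,
    ← aux_card_full (F := F) (le_min_iff.mp hr).2, ← aux_card_GL (F := F), ← aux_key,
    Nat.card_prod]
  congr 1
  -- card {C : r × n // rank = r} = card {C' : n × r // rank = r} via transpose
  apply Nat.card_congr
  exact
    { toFun := fun C => ⟨C.1ᵀ, by rw [Matrix.rank_transpose, C.2]⟩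
      invFun := fun C => ⟨C.1ᵀ, by rw [Matrix.rank_transpose, C.2]⟩
      left_inv := fun C => by ext i j; rfl
      right_inv := fun C => by ext i j; rfl }
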